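/- Let n ≥ 6, 0 < i < j < n/2, gcd(n,i,j) = 1, i+j ≠ n/2. Then in C_n(i,j), distinct vertices a and b have a common neighbor if and only if b - a ∈ {2i, -2i, 2j, -2j, i+j, -(i+j), i-j, j-i} (mod n). -/

import Mathlib

/-- The two-generator circulant graph `C_n(i,j)` on `ℤ/nℤ`:
distinct `a, b` are adjacent iff `a - b ∈ {i, -i, j, -j}`. -/
def circulant (n : ℕ) (i j : ZMod n) : SimpleGraph (ZMod n) where
  Adj a b := a ≠ b ∧ (a - b = i ∨ a - b = -i ∨ a - b = j ∨ a - b = -j)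
  symm := by
    constructor
    rintro a b ⟨hab, h⟩
    refine ⟨fun h' => hab h'.symm, ?_⟩
    have hba : b - a = -(a - b) := by ring
    rcases h with h | h | h | h <;> rw [hba, h] <;> simp
  loopless := by constructor; rintro a ⟨h, -⟩; exact h rfl

theorem stmt_15 (n i j : ℕ) (hn : 6 ≤ n) (hi : 0 < i) (hij : i < j)
    (hj : 2 * j < n) (hgcd : Nat.gcd n (Nat.gcd i j) = 1)
    (hsum : 2 * (i + j) ≠ n) :
    ∀ a b : ZMod n, a ≠ b →
      ((∃ c : ZMod n, (circulant n (i : ZMod n) (j : ZMod n)).Adj a c ∧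
          (circulant n (i : ZMod n) (j : ZMod n)).Adj b c) ↔
        b - a ∈ ({2 * (i : ZMod n), -(2 * (i : ZMod n)), 2 * (j : ZMod n), -(2 * (j : ZMod n)),
          (i : ZMod n) + (j : ZMod n), -((i : ZMod n) + (j : ZMod n)),
          (i : ZMod n) - (j : ZMod n), (j : ZMod n) - (i : ZMod n)} : Set (ZMod n))) := by
  haveI : NeZero n := ⟨by omega⟩
  have hi0 : (i : ZMod n) ≠ 0 := by
    intro h
    rw [ZMod.natCast_eq_zero_iff] at h
    have := Nat.le_of_dvd hi h
    omega
  have hj0 : (j : ZMod n) ≠ 0 := by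
    intro h
    rw [ZMod.natCast_eq_zero_iff] at h
    have := Nat.le_of_dvd (by omega) h
    omega
  intro a b hab
  simp only [Set.mem_insert_iff, Set.mem_singleton_iff]
  constructor
  · rintro ⟨c, ⟨hac, h1⟩, ⟨hbc, h2⟩⟩
    rcases h1 with h1 | h1 | h1 | h1 <;> rcases h2 with h2 | h2 | h2 | h2 <;>
      first
        | exact absurd (sub_eq_zero.mp (by linear_combination h2 - h1)).symm hab
        | exact Or.inl (by linear_combination h2 - h1)
        | exact Or.inr (Or.inl (by linear_combination h2 - h1))
        | exact Or.inr (Or.inr (Or.inl (by linear_combination h2 - h1)))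
        | exact Or.inr (Or.inr (Or.inr (Or.inl (by linear_combination h2 - h1))))
        | exact Or.inr (Or.inr (Or.inr (Or.inr (Or.inl (by linear_combination h2 - h1)))))
        | exact Or.inr (Or.inr (Or.inr (Or.inr (Or.inr (Or.inl (by linear_combination h2 - h1))))))
        | exact Or.inr (Or.inr (Or.inr (Or.inr (Or.inr (Or.inr (Or.inl (by linear_combination h2 - h1)))))))
        | exact Or.inr (Or.inr (Or.inr (Or.inr (Or.inr (Or.inr (Or.inr (by linear_combination h2 - h1)))))))
  · rintro (h | h | h | h | h | h | h | h)
    · exact ⟨a + (i : ZMod n),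
        ⟨fun he => hi0 (by linear_combination -he), Or.inr (Or.inl (by ring))⟩,
        ⟨fun he => hi0 (by linear_combination he - h), Or.inl (by linear_combination h)⟩⟩
    · exact ⟨a - (i : ZMod n),
        ⟨fun he => hi0 (by linear_combination he), Or.inl (by ring)⟩,
        ⟨fun he => hi0 (by linear_combination h - he), Or.inr (Or.inl (by linear_combination h))⟩⟩
    · exact ⟨a + (j : ZMod n),
        ⟨fun he => hj0 (by linear_combination -he), Or.inr (Or.inr (Or.inr (by ring)))⟩,
        ⟨fun he => hj0 (by linear_combination he - h), Or.inr (Or.inr (Or.inl (by linear_combination h)))⟩⟩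
    · exact ⟨a - (j : ZMod n),
        ⟨fun he => hj0 (by linear_combination he), Or.inr (Or.inr (Or.inl (by ring)))⟩,
        ⟨fun he => hj0 (by linear_combination h - he), Or.inr (Or.inr (Or.inr (by linear_combination h)))⟩⟩
    · exact ⟨a + (i : ZMod n),
        ⟨fun he => hi0 (by linear_combination -he), Or.inr (Or.inl (by ring))⟩,
        ⟨fun he => hj0 (by linear_combination he - h), Or.inr (Or.inr (Or.inl (by linear_combination h)))⟩⟩
    · exact ⟨a - (i : ZMod n),
        ⟨fun he => hi0 (by linear_combination he), Or.inl (by ring)⟩,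
        ⟨fun he => hj0 (by linear_combination h - he), Or.inr (Or.inr (Or.inr (by linear_combination h)))⟩⟩
    · exact ⟨a + (i : ZMod n),
        ⟨fun he => hi0 (by linear_combination -he), Or.inr (Or.inl (by ring))⟩,
        ⟨fun he => hj0 (by linear_combination h - he), Or.inr (Or.inr (Or.inr (by linear_combination h)))⟩⟩
    · exact ⟨a + (j : ZMod n),
        ⟨fun he => hj0 (by linear_combination -he), Or.inr (Or.inr (Or.inr (by ring)))⟩,
        ⟨fun he => hi0 (by linear_combination h - he), Or.inr (Or.inl (by linear_combination h))⟩⟩
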